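/- Let f : ℝ≥0 → ℝ be locally bounded, let h ≥ 0, and for an open set A let D_f(A,h) denote the Hausdorff dimension of {t ∈ A : h_f(t) = h}, where h_f is the pointwise Hölder exponent of f. Then for any open interval I = (a,b) ⊂ ℝ≥0, D_f(I,h) = sup over t ∈ I of D_f(t,h), where D_f(t,h) = lim_{n→∞} D_f(V_n, h) for any basis of neighborhoods (V_n) of t. -/

import Mathlib

open MeasureTheory Filter Set
open scoped ENNReal Classical

/-- Pointwise Hölder exponent (with polynomial correction), `sSup ∅ = 0`. -/
noncomputable def holderExponent (f : ℝ → ℝ) (t₀ : ℝ) : ℝ :=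
  sSup {α : ℝ | 0 < α ∧ ∃ C : ℝ, 0 < C ∧ ∃ P : Polynomial ℝ, (P.natDegree : ℝ) < α ∧
    ∀ᶠ t in nhds t₀, |f t - P.eval t| ≤ C * |t - t₀| ^ α}

/-- Singularity spectrum of `f` on a set `A`, with convention `dim ∅ = ⊥ = -∞`. -/

noncomputable def spectrumOn (f : ℝ → ℝ) (A : Set ℝ) (h : ℝ) : EReal :=
  if {t | t ∈ A ∧ holderExponent f t = h} = ∅ then ⊥
  else ((dimH {t | t ∈ A ∧ holderExponent f t = h} : ℝ≥0∞) : EReal)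

/-- Local spectrum at `t₀`: the limit of `spectrumOn` over shrinking neighborhoods,
which by monotonicity equals the infimum over neighborhoods of `t₀`. -/
noncomputable def localSpectrum (f : ℝ → ℝ) (t₀ : ℝ) (h : ℝ) : EReal :=
  ⨅ (V : Set ℝ) (_ : V ∈ nhds t₀), spectrumOn f V h

theorem stmt0 (f : ℝ → ℝ)
    (hf : ∀ t : ℝ, ∃ C : ℝ, ∀ᶠ s in nhds t, |f s| ≤ C)
    (h : ℝ) (hh : 0 ≤ h) (a b : ℝ) (ha : 0 ≤ a) (hab : a < b) :
    spectrumOn f (Set.Ioo a b) h = ⨆ t ∈ Set.Ioo a b, localSpectrum f t h := by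
  refine le_antisymm ?_ (iSup₂_le fun t ht => iInf₂_le _ (isOpen_Ioo.mem_nhds ht))
  set S := ⨆ t ∈ Set.Ioo a b, localSpectrum f t h with hS
  by_cases hE : {t | t ∈ Set.Ioo a b ∧ holderExponent f t = h} = ∅
  · rw [spectrumOn, if_pos hE]; exact bot_le
  · obtain ⟨t₀, ht₀⟩ := Set.nonempty_iff_ne_empty.2 hE
    have h0 : (0 : EReal) ≤ localSpectrum f t₀ h := by
      refine le_iInf₂ fun W hW => ?_
      have hne : {t | t ∈ W ∧ holderExponent f t = h} ≠ ∅ := by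
        refine Set.nonempty_iff_ne_empty.1 ⟨t₀, mem_of_mem_nhds hW, ht₀.2⟩
      rw [spectrumOn, if_neg hne, ← EReal.coe_ennreal_zero,
        EReal.coe_ennreal_le_coe_ennreal_iff]
      exact zero_le
    have hS0 : (0 : EReal) ≤ S :=
      h0.trans (le_iSup₂ (f := fun t _ => localSpectrum f t h) t₀ ht₀.1)
    rw [spectrumOn, if_neg hE]
    refine le_of_forall_gt_imp_ge_of_dense fun c hc => ?_
    have hc0 : (0 : EReal) < c := lt_of_le_of_lt hS0 hc
    have key : ∀ t ∈ Set.Ioo a b, ∃ W ∈ nhds t, spectrumOn f W h < c := by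
      intro t ht
      have hlt : localSpectrum f t h < c :=
        lt_of_le_of_lt (le_iSup₂ (f := fun t _ => localSpectrum f t h) t ht) hc
      rw [localSpectrum] at hlt
      obtain ⟨W, hW⟩ := iInf_lt_iff.mp hlt
      obtain ⟨hWmem, hWlt⟩ := iInf_lt_iff.mp hW
      exact ⟨W, hWmem, hWlt⟩
    choose! V hVmem hVlt using key
    obtain ⟨T, hTsub, hTc, hTcov⟩ :=
      TopologicalSpace.countable_cover_nhdsWithin (f := V) (s := Set.Ioo a b)
        (fun x hx => mem_nhdsWithin_of_mem_nhds (hVmem x hx))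
    set E := {t | t ∈ Set.Ioo a b ∧ holderExponent f t = h} with hEdef
    have hsub : E ⊆ ⋃ x ∈ T, (E ∩ V x) := by
      intro t ht
      obtain ⟨x, hx, hxV⟩ := Set.mem_iUnion₂.1 (hTcov ht.1)
      exact Set.mem_iUnion₂.2 ⟨x, hx, ht, hxV⟩
    have hd : dimH E ≤ ⨆ x ∈ T, dimH (E ∩ V x) :=
      (dimH_mono hsub).trans_eq (dimH_bUnion hTc _)
    induction c with
    | bot => exact absurd hc0 (by simp)
    | top => exact le_top
    | coe r =>
      have hr0 : (0 : ℝ) ≤ r := le_of_lt (by exact_mod_cast hc0)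
      have hpiece : ∀ x ∈ T, dimH (E ∩ V x) ≤ ENNReal.ofReal r := by
        intro x hxT
        have hsub2 : E ∩ V x ⊆ {t | t ∈ V x ∧ holderExponent f t = h} :=
          fun t ht => ⟨ht.2, ht.1.2⟩
        by_cases hx : {t | t ∈ V x ∧ holderExponent f t = h} = ∅
        · have : E ∩ V x = ∅ := Set.eq_empty_of_subset_empty (hx ▸ hsub2)
          simp [this]
        · have := hVlt x (hTsub hxT)
          rw [spectrumOn, if_neg hx] at this
          have hle : ((dimH {t | t ∈ V x ∧ holderExponent f t = h} : ℝ≥0∞) : EReal)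
              ≤ ((ENNReal.ofReal r : ℝ≥0∞) : EReal) := by
            rw [EReal.coe_ennreal_ofReal, max_eq_left hr0]
            exact this.le
          exact (dimH_mono hsub2).trans (EReal.coe_ennreal_le_coe_ennreal_iff.1 hle)
      have htot : dimH E ≤ ENNReal.ofReal r := hd.trans (iSup₂_le hpiece)
      calc ((dimH E : ℝ≥0∞) : EReal) ≤ ((ENNReal.ofReal r : ℝ≥0∞) : EReal) :=
            EReal.coe_ennreal_le_coe_ennreal_iff.2 htot
        _ = (r : EReal) := by rw [EReal.coe_ennreal_ofReal, max_eq_left hr0]
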